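/- Let 𝒫 be a finite partition of S¹ with |𝒫| ≥ 2 into path-connected parts such that the auxiliary quiver Q — with vertex set 𝒫 and an arrow P → P' whenever P ≠ P', P ∪ P' is path-connected, and there exist x ∈ P, y ∈ P' with y ⪯ x — is a quiver of type Ã_{|𝒫|−1}. If M is an indecomposable finite-dimensional representation of Q, then its push down — the representation U of Ã_ℝ with U(x) = M(P) for x ∈ P, equal to the identity on generating morphisms within a part and to the composite of the maps of M along the corresponding arrows of Q otherwise — is an indecomposable representation of Ã_ℝ. -/

import Mathlib

open Set

noncomputable section

/-- A continuous quiver of type Ã: the data of the (even) set `S` of sinks/sources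
on the circle, described via the cardinality `2*m`-ish data `m` and the angles `α`.
When `m = 0` we are in the cyclic case and fix `α j = π j`. -/
structure AtR where
  m : ℕ
  α : ℤ → ℝ
  mono : StrictMono α
  cyc : m = 0 → ∀ j : ℤ, α j = Real.pi * j
  per : m ≠ 0 → ∀ j : ℤ, α (j + 2 * m) = α j + 2 * Real.pi
  base0 : 0 ≤ α 0
  base1 : α 0 < 2 * Real.pi

namespace AtR

variable (Q : AtR)

/-- `covRel θ φ` holds iff there is a morphism `e^{iθ} → e^{iφ}` in the continuous
quiver of type Ã, presented on the universal cover `ℝ` of the circle.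
In the cyclic case (`m = 0`) morphisms go counterclockwise, i.e. `θ ≤ φ`;
otherwise a morphism stays within one (lifted) arc `[α j, α (j+1)]` and goes
down on even arcs (towards the sink `α j`) and up on odd arcs. -/
def covRel (θ φ : ℝ) : Prop :=
  if Q.m = 0 then θ ≤ φ
  else ∃ j : ℤ, θ ∈ Set.Icc (Q.α j) (Q.α (j + 1)) ∧ φ ∈ Set.Icc (Q.α j) (Q.α (j + 1)) ∧
    ((Even j ∧ φ ≤ θ) ∨ (¬ Even j ∧ θ ≤ φ))

variable {Q}

lemma arcs_overlap {j j' : ℤ} {x : ℝ}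
    (hj : x ∈ Set.Icc (Q.α j) (Q.α (j + 1))) (hj' : x ∈ Set.Icc (Q.α j') (Q.α (j' + 1)))
    (hne : j ≠ j') :
    (j' = j + 1 ∧ x = Q.α (j + 1)) ∨ (j = j' + 1 ∧ x = Q.α j) := by
  rcases lt_or_gt_of_ne hne with h | h
  · left
    have h1 : j + 1 ≤ j' := by omega
    have h2 : Q.α (j + 1) ≤ Q.α j' := Q.mono.monotone h1
    have hx : x = Q.α (j + 1) := le_antisymm hj.2 (le_trans h2 hj'.1)
    have hx2 : Q.α (j + 1) = Q.α j' := le_antisymm h2 (hx ▸ hj'.1)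
    exact ⟨(Q.mono.injective hx2).symm, hx⟩
  · right
    have h1 : j' + 1 ≤ j := by omega
    have h2 : Q.α (j' + 1) ≤ Q.α j := Q.mono.monotone h1
    have hx : x = Q.α (j' + 1) := le_antisymm hj'.2 (le_trans h2 hj.1)
    have hx2 : Q.α (j' + 1) = Q.α j := le_antisymm h2 (hx ▸ hj.1)
    exact ⟨Q.mono.injective hx2.symm, hx.trans hx2⟩

/-- Key lemma: if there are morphisms `θ → φ` and `φ → ψ` then `φ` lies in the
convex hull of `{θ, ψ}`. -/
lemma covRel_hull {θ φ ψ : ℝ} (h1 : Q.covRel θ φ) (h2 : Q.covRel φ ψ) :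
    min θ ψ ≤ φ ∧ φ ≤ max θ ψ := by
  unfold covRel at h1 h2
  by_cases hm : Q.m = 0
  · rw [if_pos hm] at h1 h2
    exact ⟨le_trans (min_le_left _ _) h1, le_trans h2 (le_max_right _ _)⟩
  · rw [if_neg hm] at h1 h2
    obtain ⟨j, hθ, hφ, hp⟩ := h1
    obtain ⟨j2, hφ2, hψ, hp2⟩ := h2
    by_cases hjj : j = j2
    · subst hjj
      rcases hp with ⟨he, hle⟩ | ⟨ho, hle⟩ <;> rcases hp2 with ⟨he2, hle2⟩ | ⟨ho2, hle2⟩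
      · exact ⟨le_trans (min_le_right _ _) hle2, le_trans hle (le_max_left _ _)⟩
      · exact absurd he ho2
      · exact absurd he2 ho
      · exact ⟨le_trans (min_le_left _ _) hle, le_trans hle2 (le_max_right _ _)⟩
    · rcases arcs_overlap hφ hφ2 hjj with ⟨hj2, hφe⟩ | ⟨hj2, hφe⟩
      · -- j2 = j + 1, φ = α (j+1)
        rcases hp with ⟨he, hle⟩ | ⟨ho, hle⟩
        · -- Even j, φ ≤ θ and θ ≤ α (j+1) = φ so θ = φ
          have hθφ : θ = φ := le_antisymm (hφe ▸ hθ.2) hle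
          rw [← hθφ]
          exact ⟨min_le_left _ _, le_max_left _ _⟩
        · -- Odd j so j2 = j+1 is even
          have he2 : Even j2 := by
            rw [hj2]; rcases Int.even_or_odd j with h | h
            · exact absurd h ho
            · exact h.add_one
          rcases hp2 with ⟨_, hle2⟩ | ⟨ho2, _⟩
          · -- ψ ≤ φ, but φ = α j2 is the bottom of the arc of j2, so ψ = φ
            have hψφ : ψ = φ := by
              have : Q.α j2 ≤ ψ := hψ.1
              have hb : φ = Q.α j2 := by rw [hj2]; exact hφe
              linarith [hb ▸ this]
            rw [← hψφ]
            exact ⟨min_le_right _ _, le_max_right _ _⟩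
          · exact absurd he2 ho2
      · -- j = j2 + 1, φ = α j
        rcases hp2 with ⟨he2, hle2⟩ | ⟨ho2, hle2⟩
        · -- Even j2, ψ ≤ φ; φ = α j = α (j2+1) is the top of arc j2... and j odd
          have ho : ¬ Even j := by
            rw [hj2]; intro h
            exact (Int.even_add_one.mp h) he2
          rcases hp with ⟨he', _⟩ | ⟨_, hle⟩
          · exact absurd he' ho
          · -- θ ≤ φ, φ = α j is bottom of arc j, so θ = φ
            have hθφ : θ = φ := le_antisymm hle (hφe ▸ hθ.1)
            rw [← hθφ]
            exact ⟨min_le_left _ _, le_max_left _ _⟩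
        · -- Odd j2, φ ≤ ψ; φ = α (j2+1) top of arc j2 so ψ = φ
          have hψφ : ψ = φ := by
            have hup : ψ ≤ Q.α (j2 + 1) := hψ.2
            have hb : φ = Q.α (j2 + 1) := by rw [← hj2]; exact hφe
            linarith [hb ▸ hup]
          rw [← hψφ]
          exact ⟨min_le_right _ _, le_max_right _ _⟩

lemma covRel_up (j : ℤ) (h : Q.m = 0 ∨ ¬ Even j) : Q.covRel (Q.α j) (Q.α (j + 1)) := by
  unfold covRel
  split_ifs with hm
  · exact Q.mono.monotone (by omega)
  · rcases h with h0 | hodd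
    · exact absurd h0 hm
    · exact ⟨j, ⟨le_rfl, Q.mono.monotone (by omega)⟩,
        ⟨Q.mono.monotone (by omega), le_rfl⟩,
        Or.inr ⟨hodd, Q.mono.monotone (by omega)⟩⟩

lemma covRel_down (j : ℤ) (hm : Q.m ≠ 0) (he : Even j) :
    Q.covRel (Q.α (j + 1)) (Q.α j) := by
  unfold covRel
  rw [if_neg hm]
  exact ⟨j, ⟨Q.mono.monotone (by omega), le_rfl⟩, ⟨le_rfl, Q.mono.monotone (by omega)⟩,
    Or.inl ⟨he, Q.mono.monotone (by omega)⟩⟩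

variable (Q)

/-- The number of arcs used to travel once around the circle. -/
def periodN : ℕ := if Q.m = 0 then 2 else 2 * Q.m

lemma periodN_pos : 0 < Q.periodN := by
  unfold periodN; split_ifs <;> omega

lemma α_periodN : Q.α (Q.periodN : ℤ) = Q.α 0 + 2 * Real.pi := by
  unfold periodN
  split_ifs with hm
  · have h2 : ((2:ℕ):ℤ) = 2 := by norm_cast
    rw [h2, Q.cyc hm 2, Q.cyc hm 0]
    push_cast; ring
  · have := Q.per hm 0
    rw [zero_add] at this
    rw [← this]
    norm_cast

end AtR
/-- A representation (i.e. an `S¹` persistence module) of the continuous quiver of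
type Ã, presented equivariantly on the universal cover: vector spaces `obj θ`,
linear maps along every morphism of the quiver (encoded by `covRel`), and a
periodicity isomorphism `per` identifying `obj (θ + 2π)` with `obj θ`,
compatibly with the maps. -/
structure SRep (k : Type) [Field k] (Q : AtR) where
  obj : ℝ → Type
  [instAdd : ∀ θ, AddCommGroup (obj θ)]
  [instMod : ∀ θ, Module k (obj θ)]
  map : ∀ {θ φ : ℝ}, Q.covRel θ φ → (obj θ →ₗ[k] obj φ)
  map_id : ∀ (θ : ℝ) (h : Q.covRel θ θ), map h = LinearMap.id
  map_comp : ∀ {θ φ ψ : ℝ} (h1 : Q.covRel θ φ) (h2 : Q.covRel φ ψ) (h3 : Q.covRel θ ψ),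
      map h3 = (map h2).comp (map h1)
  per : ∀ θ : ℝ, obj (θ + 2 * Real.pi) ≃ₗ[k] obj θ
  per_map : ∀ {θ φ : ℝ} (h : Q.covRel θ φ) (h' : Q.covRel (θ + 2 * Real.pi) (φ + 2 * Real.pi)),
      (map h).comp (per θ).toLinearMap = ((per φ).toLinearMap).comp (map h')

attribute [instance] SRep.instAdd SRep.instMod

namespace SRep

variable {k : Type} [Field k] {Q : AtR}

lemma per_map_apply (V : SRep k Q) {θ φ : ℝ} (h : Q.covRel θ φ)
    (h' : Q.covRel (θ + 2 * Real.pi) (φ + 2 * Real.pi)) (x : V.obj (θ + 2 * Real.pi)) :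
    V.map h (V.per θ x) = V.per φ (V.map h' x) :=
  LinearMap.congr_fun (V.per_map h h') x

/-- Transport along an equality of points of the cover. -/
def castO (V : SRep k Q) {a b : ℝ} (h : a = b) : V.obj a ≃ₗ[k] V.obj b :=
  h ▸ LinearEquiv.refl k (V.obj a)

/-- A family of linear maps is a morphism of representations if it is natural with
respect to all the structure maps and the periodicity isomorphisms. -/
def IsHomFam (V W : SRep k Q) (f : ∀ θ, V.obj θ →ₗ[k] W.obj θ) : Prop :=
  (∀ {θ φ : ℝ} (h : Q.covRel θ φ) (v : V.obj θ), f φ (V.map h v) = W.map h (f θ v)) ∧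
  (∀ (θ : ℝ) (v : V.obj (θ + 2 * Real.pi)), f θ (V.per θ v) = W.per θ (f (θ + 2 * Real.pi) v))

/-- Two representations are isomorphic if there is a family of linear isomorphisms
natural with respect to the structure maps and the periodicity isomorphisms. -/
def RepIso (V W : SRep k Q) : Prop :=
  ∃ e : ∀ θ, V.obj θ ≃ₗ[k] W.obj θ,
    (∀ {θ φ : ℝ} (h : Q.covRel θ φ) (v : V.obj θ), e φ (V.map h v) = W.map h (e θ v)) ∧
    (∀ (θ : ℝ) (v : V.obj (θ + 2 * Real.pi)), e θ (V.per θ v) = W.per θ (e (θ + 2 * Real.pi) v))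

/-- `U` is a (direct) summand of `V`. -/
def SummandOf (U V : SRep k Q) : Prop :=
  ∃ (f : ∀ θ, U.obj θ →ₗ[k] V.obj θ) (g : ∀ θ, V.obj θ →ₗ[k] U.obj θ),
    IsHomFam U V f ∧ IsHomFam V U g ∧ ∀ (θ : ℝ) (u : U.obj θ), g θ (f θ u) = u

/-- A representation is nonzero if some of its spaces is nonzero. -/
def Nonzero (V : SRep k Q) : Prop := ∃ (θ : ℝ) (v : V.obj θ), v ≠ 0

/-- Pointwise finite-dimensional. -/
def Pwf (V : SRep k Q) : Prop := ∀ θ, FiniteDimensional k (V.obj θ)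

/-- Binary direct sum of representations. -/
def prod (V W : SRep k Q) : SRep k Q where
  obj θ := V.obj θ × W.obj θ
  map h := (V.map h).prodMap (W.map h)
  map_id θ h := by
    (try dsimp only); rw [V.map_id θ h, W.map_id θ h]; exact LinearMap.prodMap_id
  map_comp h1 h2 h3 := by
    try dsimp only
    rw [V.map_comp h1 h2 h3, W.map_comp h1 h2 h3]
    exact (LinearMap.prodMap_comp _ _ _ _).symm
  per θ := (V.per θ).prodCongr (W.per θ)
  per_map h h' := by
    try dsimp only
    apply LinearMap.ext
    rintro ⟨a, b⟩
    simp only [LinearMap.comp_apply, LinearEquiv.coe_coe, LinearMap.prodMap_apply,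
      LinearEquiv.prodCongr_apply]
    exact Prod.ext (V.per_map_apply h h' a) (W.per_map_apply h h' b)

/-- Arbitrary direct sums of representations. -/
def dsum {B : Type} (A : B → SRep k Q) : SRep k Q where
  obj θ := Π₀ b, (A b).obj θ
  map h := DFinsupp.mapRange.linearMap fun b => (A b).map h
  map_id θ h := by
    try dsimp only
    have : (fun b => (A b).map h) = fun b => (LinearMap.id : (A b).obj θ →ₗ[k] _) := by
      funext b; exact (A b).map_id θ h
    rw [this]; exact DFinsupp.mapRange.linearMap_id
  map_comp h1 h2 h3 := by
    try dsimp only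
    have : (fun b => (A b).map h3) = fun b => ((A b).map h2).comp ((A b).map h1) := by
      funext b; exact (A b).map_comp h1 h2 h3
    rw [this]; exact DFinsupp.mapRange.linearMap_comp _ _
  per θ := DFinsupp.mapRange.linearEquiv fun b => (A b).per θ
  per_map h h' := by
    try dsimp only
    apply LinearMap.ext
    intro x
    ext b
    simp only [LinearMap.comp_apply, LinearEquiv.coe_coe,
      DFinsupp.mapRange.linearEquiv_apply, DFinsupp.mapRange.linearMap_apply,
      DFinsupp.mapRange_apply]
    exact (A b).per_map_apply h h' (x b)

/-- Indecomposability. -/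
def Indecomposable (V : SRep k Q) : Prop :=
  V.Nonzero ∧ ∀ A B : SRep k Q, A.Nonzero → B.Nonzero → ¬ RepIso V (A.prod B)

end SRep
/-! ## Bars -/

/-- The basis of the bar `M_I` at the point `e^{iθ}`: the set `ξ⁻¹(e^{iθ}) ∩ I`. -/
def barIdx (I : Set ℝ) (θ : ℝ) : Type :=
  {β : ℝ // β ∈ I ∧ ∃ n : ℤ, β = θ + 2 * Real.pi * n}

/-- The canonical identification of the bars' bases over `θ + 2π` and `θ`. -/
def barShift (I : Set ℝ) (θ : ℝ) : barIdx I (θ + 2 * Real.pi) ≃ barIdx I θ where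
  toFun b := ⟨b.1, b.2.1, by
    obtain ⟨n, hn⟩ := b.2.2
    exact ⟨n + 1, by push_cast; linarith⟩⟩
  invFun b := ⟨b.1, b.2.1, by
    obtain ⟨n, hn⟩ := b.2.2
    exact ⟨n - 1, by push_cast; linarith⟩⟩
  left_inv b := by apply Subtype.ext; rfl
  right_inv b := by apply Subtype.ext; rfl

variable (k : Type) [Field k]

/-- The structure map of the bar `M_I` along a morphism `θ → φ`:
a basis vector `b_β` is sent to `b_{β - θ + φ}` when `β - θ + φ ∈ I` and to `0`
otherwise. -/
def barMapHom (I : Set ℝ) (θ φ : ℝ) :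
    (barIdx I θ →₀ k) →ₗ[k] (barIdx I φ →₀ k) := by
  classical
  exact Finsupp.linearCombination k (fun β : barIdx I θ =>
    if h : β.1 - θ + φ ∈ I then
      Finsupp.single (⟨β.1 - θ + φ, h, by
        obtain ⟨n, hn⟩ := β.2.2
        exact ⟨n, by rw [hn]; ring⟩⟩ : barIdx I φ) (1 : k)
    else 0)

variable {k}

namespace SRep

variable {Q : AtR}

/-- `V` is (isomorphic to) the bar `M_I` on the bounded interval `I ⊂ ℝ`. -/
def BarOn (I : Set ℝ) (V : SRep k Q) : Prop :=
  I.Nonempty ∧ Bornology.IsBounded I ∧ I.OrdConnected ∧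
  ∃ e : ∀ θ, V.obj θ ≃ₗ[k] (barIdx I θ →₀ k),
    (∀ {θ φ : ℝ} (h : Q.covRel θ φ) (v : V.obj θ),
        e φ (V.map h v) = barMapHom k I θ φ (e θ v)) ∧
    (∀ (θ : ℝ) (v : V.obj (θ + 2 * Real.pi)),
        e θ (V.per θ v) = Finsupp.equivMapDomain (barShift I θ) (e (θ + 2 * Real.pi) v))

/-- `V` is a bar. -/
def IsBar (V : SRep k Q) : Prop := ∃ I : Set ℝ, BarOn I V

end SRep
/-! ## Jordan cells -/

namespace SRep

variable {k : Type} [Field k] {Q : AtR}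

/-- One step of the monodromy: the isomorphism `V(α j) ≃ V(α (j+1))` obtained
from the structure map along the arc (or its inverse, depending on the
orientation of the arc). -/
def step (V : SRep k Q)
    (hiso : ∀ ⦃θ φ : ℝ⦄ (h : Q.covRel θ φ), Function.Bijective (V.map h)) (j : ℤ) :
    V.obj (Q.α j) ≃ₗ[k] V.obj (Q.α (j + 1)) :=
  if h : Q.m = 0 ∨ ¬ Even j then
    LinearEquiv.ofBijective _ (hiso (AtR.covRel_up j h))
  else
    (LinearEquiv.ofBijective _ (hiso (AtR.covRel_down j
      (by push_neg at h; exact h.1) (by push_neg at h; exact h.2)))).symm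

/-- The zig-zag isomorphism from `V(α 0)` to `V(α n)`. -/
def zig (V : SRep k Q)
    (hiso : ∀ ⦃θ φ : ℝ⦄ (h : Q.covRel θ φ), Function.Bijective (V.map h)) :
    (n : ℕ) → (V.obj (Q.α 0) ≃ₗ[k] V.obj (Q.α (n : ℤ)))
  | 0 => V.castO (congrArg Q.α (by norm_num))
  | (n + 1) => ((V.zig hiso n).trans (V.step hiso (n : ℤ))).trans
      (V.castO (congrArg Q.α (by push_cast; ring)))

/-- The monodromy automorphism `V̂` of `V(α 0)`: travel once counterclockwise
around the circle (via `zig`) and come back via the periodicity isomorphism. -/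
def monodromy (V : SRep k Q)
    (hiso : ∀ ⦃θ φ : ℝ⦄ (h : Q.covRel θ φ), Function.Bijective (V.map h)) :
    V.obj (Q.α 0) ≃ₗ[k] V.obj (Q.α 0) :=
  ((V.zig hiso Q.periodN).trans (V.castO Q.α_periodN)).trans (V.per (Q.α 0))

/-- `V` is a Jordan cell: its spaces have a constant finite dimension `d ≥ 1`,
all its structure maps are isomorphisms, and `V(α 0)` admits no direct sum
decomposition into two nonzero subspaces invariant under the monodromy. -/
structure IsJordanCell (V : SRep k Q) : Prop where
  bij : ∀ ⦃θ φ : ℝ⦄ (h : Q.covRel θ φ), Function.Bijective (V.map h)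
  dim : ∃ d : ℕ, 1 ≤ d ∧ ∀ θ, Module.finrank k (V.obj θ) = d
  indec : ∀ U W : Submodule k (V.obj (Q.α 0)), IsCompl U W →
      (∀ u ∈ U, V.monodromy bij u ∈ U) → (∀ w ∈ W, V.monodromy bij w ∈ W) →
      U = ⊥ ∨ W = ⊥

end SRep
/-! ## Restriction -/

/-- The periodization of a subset of `ℝ`: the full preimage under `ξ` of its image
in the circle. -/
def periodize (s : Set ℝ) : Set ℝ := {θ | ∃ n : ℤ, θ + 2 * Real.pi * n ∈ s}

lemma periodize_shift (s : Set ℝ) (θ : ℝ) :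
    θ ∈ periodize s ↔ θ + 2 * Real.pi ∈ periodize s := by
  constructor
  · rintro ⟨n, hn⟩
    refine ⟨n - 1, ?_⟩
    push_cast
    rw [show θ + 2 * Real.pi + 2 * Real.pi * ((n : ℝ) - 1) = θ + 2 * Real.pi * (n : ℝ) from
      by ring]
    exact hn
  · rintro ⟨n, hn⟩
    refine ⟨n + 1, ?_⟩
    push_cast
    rw [show θ + 2 * Real.pi * ((n : ℝ) + 1) = θ + 2 * Real.pi + 2 * Real.pi * (n : ℝ) from
      by ring]
    exact hn

namespace SRep

open Classical

variable {k : Type} [Field k] {Q : AtR}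

/-- The restriction `V|_A` of a representation to a (2π-periodic) subset `A ⊂ ℝ`
corresponding to a subset of the circle.  Its space at `θ ∈ A` is `V(θ)` and `0`
elsewhere; its structure map along a morphism `θ → φ` is `V(θ,φ)` when every
point through which the morphism factors lies in `A` (the set of such points
being the interval `[min θ φ, max θ φ]`), and `0` otherwise. -/
def restrict (V : SRep k Q) (A : Set ℝ) (hA : ∀ θ, θ ∈ A ↔ θ + 2 * Real.pi ∈ A) :
    SRep k Q where
  obj θ := PLift (θ ∈ A) → V.obj θ
  map {θ φ} h :=
    { toFun := fun F _ =>
        if c : Set.Icc (min θ φ) (max θ φ) ⊆ A then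
          V.map h (F ⟨c ⟨min_le_left θ φ, le_max_left θ φ⟩⟩) else 0
      map_add' := by
        intro F G; funext hφ
        by_cases c : Set.Icc (min θ φ) (max θ φ) ⊆ A <;> simp [c]
      map_smul' := by
        intro a F; funext hφ
        by_cases c : Set.Icc (min θ φ) (max θ φ) ⊆ A <;> simp [c] }
  map_id θ h := by
    apply LinearMap.ext; intro F; funext hφ
    have c : Set.Icc (min θ θ) (max θ θ) ⊆ A := by
      rw [min_self, max_self, Set.Icc_self]
      exact Set.singleton_subset_iff.mpr hφ.down
    simp only [LinearMap.coe_mk, AddHom.coe_mk, LinearMap.id_coe, id_eq]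
    rw [dif_pos c, V.map_id θ h]
    rfl
  map_comp {θ φ ψ} h1 h2 h3 := by
    apply LinearMap.ext; intro F; funext hψ
    have hkey := AtR.covRel_hull h1 h2
    have s1 : Set.Icc (min θ φ) (max θ φ) ⊆ Set.Icc (min θ ψ) (max θ ψ) :=
      Set.Icc_subset_Icc (le_min (min_le_left θ ψ) hkey.1) (max_le (le_max_left θ ψ) hkey.2)
    have s2 : Set.Icc (min φ ψ) (max φ ψ) ⊆ Set.Icc (min θ ψ) (max θ ψ) :=
      Set.Icc_subset_Icc (le_min hkey.1 (min_le_right θ ψ)) (max_le hkey.2 (le_max_right θ ψ))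
    by_cases c1 : Set.Icc (min θ φ) (max θ φ) ⊆ A
    · by_cases c2 : Set.Icc (min φ ψ) (max φ ψ) ⊆ A
      · have c3 : Set.Icc (min θ ψ) (max θ ψ) ⊆ A := by
          intro z hz
          rcases le_total θ ψ with hθψ | hθψ
          · rw [min_eq_left hθψ, max_eq_right hθψ] at hz
            rcases le_total z φ with hzφ | hzφ
            · exact c1 ⟨le_trans (min_le_left θ φ) hz.1, le_trans hzφ (le_max_right θ φ)⟩
            · exact c2 ⟨le_trans (min_le_left φ ψ) hzφ, le_trans hz.2 (le_max_right φ ψ)⟩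
          · rw [min_eq_right hθψ, max_eq_left hθψ] at hz
            rcases le_total z φ with hzφ | hzφ
            · exact c2 ⟨le_trans (min_le_right φ ψ) hz.1, le_trans hzφ (le_max_left φ ψ)⟩
            · exact c1 ⟨le_trans (min_le_right θ φ) hzφ, le_trans hz.2 (le_max_left θ φ)⟩
        simp only [LinearMap.coe_mk, AddHom.coe_mk, LinearMap.comp_apply]
        rw [dif_pos c3, dif_pos c2, dif_pos c1, V.map_comp h1 h2 h3]
        rfl
      · have c3 : ¬ Set.Icc (min θ ψ) (max θ ψ) ⊆ A := fun c3 => c2 fun z hz => c3 (s2 hz)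
        simp only [LinearMap.coe_mk, AddHom.coe_mk, LinearMap.comp_apply]
        rw [dif_neg c3, dif_neg c2]
    · have c3 : ¬ Set.Icc (min θ ψ) (max θ ψ) ⊆ A := fun c3 => c1 fun z hz => c3 (s1 hz)
      simp only [LinearMap.coe_mk, AddHom.coe_mk, LinearMap.comp_apply]
      rw [dif_neg c3]
      by_cases c2 : Set.Icc (min φ ψ) (max φ ψ) ⊆ A
      · rw [dif_pos c2, dif_neg c1, map_zero]
      · rw [dif_neg c2]
  per θ :=
    { toFun := fun F hθ => V.per θ (F ⟨(hA θ).mp hθ.down⟩)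
      map_add' := by intro F G; funext hθ; simp
      map_smul' := by intro a F; funext hθ; simp
      invFun := fun G h2 => (V.per θ).symm (G ⟨(hA θ).mpr h2.down⟩)
      left_inv := by intro F; funext h2; simp
      right_inv := by intro G; funext hθ; simp }
  per_map {θ φ} h h' := by
    apply LinearMap.ext; intro F; funext hφ
    have e1 : min (θ + 2 * Real.pi) (φ + 2 * Real.pi) = min θ φ + 2 * Real.pi :=
      min_add_add_right θ φ _
    have e2 : max (θ + 2 * Real.pi) (φ + 2 * Real.pi) = max θ φ + 2 * Real.pi :=
      max_add_add_right θ φ _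
    have hcc : (Set.Icc (min (θ + 2 * Real.pi) (φ + 2 * Real.pi))
        (max (θ + 2 * Real.pi) (φ + 2 * Real.pi)) ⊆ A) ↔
        (Set.Icc (min θ φ) (max θ φ) ⊆ A) := by
      rw [e1, e2]
      constructor
      · intro c z hz
        rw [hA z]
        exact c ⟨by linarith [hz.1], by linarith [hz.2]⟩
      · intro c z hz
        have h2 : z - 2 * Real.pi ∈ Set.Icc (min θ φ) (max θ φ) :=
          ⟨by linarith [hz.1], by linarith [hz.2]⟩
        have h3 := (hA (z - 2 * Real.pi)).mp (c h2)
        simpa using h3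
    simp only [LinearMap.coe_mk, AddHom.coe_mk, LinearMap.comp_apply, LinearEquiv.coe_coe,
      LinearEquiv.coe_mk]
    by_cases c : Set.Icc (min θ φ) (max θ φ) ⊆ A
    · rw [dif_pos c, dif_pos (hcc.mpr c)]
      exact V.per_map_apply h h' _
    · rw [dif_neg c, dif_neg (fun cc => c (hcc.mp cc)), map_zero]

/-- `V` is finitistic: it is pointwise finite-dimensional and for each arc
`R̄_n = [α n, α (n+1)]`, every bar in the bar code decomposition of the
restriction `V|_{R̄_n}` has support touching an endpoint of the arc. -/
def Finitistic (V : SRep k Q) : Prop :=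
  Pwf V ∧ ∀ n : ℤ, ∃ (B : Type) (Wb : B → SRep k Q) (I : B → Set ℝ),
    (∀ b, BarOn (I b) (Wb b) ∧ I b ⊆ Set.Icc (Q.α n) (Q.α (n + 1)) ∧
      (Q.α n ∈ I b ∨ Q.α (n + 1) ∈ I b)) ∧
    RepIso (V.restrict (periodize (Set.Icc (Q.α n) (Q.α (n + 1))))
      (periodize_shift _)) (dsum Wb)

end SRep
/-! ## Representations of (finite) quivers of type Ã_n

An `Ã_n` quiver has `N = n + 1` vertices, indexed by `ZMod N`, arranged
counterclockwise in a cycle, with exactly one arrow between the vertices `i` and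
`i + 1` for each `i : ZMod N`; the orientation function `o` records its direction
(`o i = true` iff the arrow goes `i → i + 1`). -/

/-- A representation of the `Ã_{N-1}` quiver with orientation `o`. -/
structure CycRep (k : Type) [Field k] (N : ℕ) (o : ZMod N → Bool) where
  M : ZMod N → Type
  [instAdd : ∀ i, AddCommGroup (M i)]
  [instMod : ∀ i, Module k (M i)]
  up : ∀ i : ZMod N, o i = true → (M i →ₗ[k] M (i + 1))
  down : ∀ i : ZMod N, o i = false → (M (i + 1) →ₗ[k] M i)

attribute [instance] CycRep.instAdd CycRep.instMod

namespace CycRep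

variable {k : Type} [Field k] {N : ℕ} {o : ZMod N → Bool}

/-- Transport along an equality of vertices. -/
def castM (A : CycRep k N o) {i i' : ZMod N} (h : i = i') : A.M i ≃ₗ[k] A.M i' :=
  h ▸ LinearEquiv.refl k (A.M i)

/-- Isomorphism of representations of the `Ã_{N-1}` quiver. -/
def Iso (A B : CycRep k N o) : Prop :=
  ∃ e : ∀ i, A.M i ≃ₗ[k] B.M i,
    (∀ (i : ZMod N) (h : o i = true) (v : A.M i),
        e (i + 1) (A.up i h v) = B.up i h (e i v)) ∧
    (∀ (i : ZMod N) (h : o i = false) (v : A.M (i + 1)),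
        e i (A.down i h v) = B.down i h (e (i + 1) v))

def Nonzero (A : CycRep k N o) : Prop := ∃ (i : ZMod N) (v : A.M i), v ≠ 0

/-- Binary direct sum. -/
def prod (A B : CycRep k N o) : CycRep k N o where
  M i := A.M i × B.M i
  up i h := (A.up i h).prodMap (B.up i h)
  down i h := (A.down i h).prodMap (B.down i h)

/-- Arbitrary direct sum. -/
def dsum {B : Type} (A : B → CycRep k N o) : CycRep k N o where
  M i := Π₀ b, (A b).M i
  up i h := DFinsupp.mapRange.linearMap fun b => (A b).up i h
  down i h := DFinsupp.mapRange.linearMap fun b => (A b).down i h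

def Indecomposable (A : CycRep k N o) : Prop :=
  A.Nonzero ∧ ∀ B C : CycRep k N o, B.Nonzero → C.Nonzero → ¬ Iso A (B.prod C)

end CycRep

/-- The basis of the bar on the interval `{a, ..., b} ⊂ ℤ` at the vertex `i`:
integers in the interval congruent to `i` mod `N`. -/
def cycIdx (N : ℕ) (a b : ℤ) (i : ZMod N) : Type :=
  {m : ℤ // m ∈ Set.Icc a b ∧ ((m : ZMod N) = i)}

variable (k : Type) [Field k]

open Classical in
/-- The bar's map along an arrow `i → i + 1` : `b_m ↦ b_{m+1}` when `m+1` stays in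
the interval, and `0` otherwise. -/
def cycBarUp (N : ℕ) (a b : ℤ) (i : ZMod N) :
    (cycIdx N a b i →₀ k) →ₗ[k] (cycIdx N a b (i + 1) →₀ k) :=
  Finsupp.linearCombination k (fun m : cycIdx N a b i =>
    if hm : m.1 + 1 ∈ Set.Icc a b then
      Finsupp.single (⟨m.1 + 1, hm, by push_cast; rw [m.2.2]⟩ : cycIdx N a b (i + 1)) (1 : k)
    else 0)

open Classical in
/-- The bar's map along an arrow `i + 1 → i` : `b_m ↦ b_{m-1}` when `m-1` stays in
the interval, and `0` otherwise. -/
def cycBarDown (N : ℕ) (a b : ℤ) (i : ZMod N) :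
    (cycIdx N a b (i + 1) →₀ k) →ₗ[k] (cycIdx N a b i →₀ k) :=
  Finsupp.linearCombination k (fun m : cycIdx N a b (i + 1) =>
    if hm : m.1 - 1 ∈ Set.Icc a b then
      Finsupp.single (⟨m.1 - 1, hm, by push_cast; rw [m.2.2]; ring⟩ : cycIdx N a b i) (1 : k)
    else 0)

variable {k}

namespace CycRep

variable {k : Type} [Field k] {N : ℕ} {o : ZMod N → Bool}

/-- `A` is (isomorphic to) the bar on the interval `{a, ..., b}` of `ℤ`. -/
def BarOn (a b : ℤ) (A : CycRep k N o) : Prop :=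
  a ≤ b ∧ ∃ e : ∀ i, A.M i ≃ₗ[k] (cycIdx N a b i →₀ k),
    (∀ (i : ZMod N) (h : o i = true) (v : A.M i),
        e (i + 1) (A.up i h v) = cycBarUp k N a b i (e i v)) ∧
    (∀ (i : ZMod N) (h : o i = false) (v : A.M (i + 1)),
        e i (A.down i h v) = cycBarDown k N a b i (e (i + 1) v))

def IsBar (A : CycRep k N o) : Prop := ∃ a b : ℤ, BarOn a b A

/-- One step `M i ≃ M (i+1)` of the monodromy of a representation all of whose
arrow maps are isomorphisms. -/
def stepC (A : CycRep k N o)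
    (hup : ∀ (i : ZMod N) (h : o i = true), Function.Bijective (A.up i h))
    (hdown : ∀ (i : ZMod N) (h : o i = false), Function.Bijective (A.down i h))
    (i : ZMod N) : A.M i ≃ₗ[k] A.M (i + 1) :=
  if h : o i = true then LinearEquiv.ofBijective _ (hup i h)
  else (LinearEquiv.ofBijective _ (hdown i (by revert h; cases o i <;> simp))).symm

def zigC (A : CycRep k N o)
    (hup : ∀ (i : ZMod N) (h : o i = true), Function.Bijective (A.up i h))
    (hdown : ∀ (i : ZMod N) (h : o i = false), Function.Bijective (A.down i h)) :
    (n : ℕ) → (A.M 0 ≃ₗ[k] A.M (n : ZMod N))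
  | 0 => A.castM (by norm_num)
  | (n + 1) => ((A.zigC hup hdown n).trans (A.stepC hup hdown (n : ZMod N))).trans
      (A.castM (by push_cast; ring))

/-- The monodromy `M̂ : M 0 ≃ M 0` obtained by composing the arrow maps and their
inverses once around the cycle. -/
def monodromyC (A : CycRep k N o)
    (hup : ∀ (i : ZMod N) (h : o i = true), Function.Bijective (A.up i h))
    (hdown : ∀ (i : ZMod N) (h : o i = false), Function.Bijective (A.down i h)) :
    A.M 0 ≃ₗ[k] A.M 0 :=
  (A.zigC hup hdown N).trans (A.castM (by simp))

/-- `A` is a Jordan cell representation of the `Ã_{N-1}` quiver. -/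
structure IsJordan (A : CycRep k N o) : Prop where
  bijUp : ∀ (i : ZMod N) (h : o i = true), Function.Bijective (A.up i h)
  bijDown : ∀ (i : ZMod N) (h : o i = false), Function.Bijective (A.down i h)
  dim : ∃ d : ℕ, 1 ≤ d ∧ ∀ i, Module.finrank k (A.M i) = d
  indec : ∀ U W : Submodule k (A.M 0), IsCompl U W →
      (∀ u ∈ U, A.monodromyC bijUp bijDown u ∈ U) →
      (∀ w ∈ W, A.monodromyC bijUp bijDown w ∈ W) → U = ⊥ ∨ W = ⊥

end CycRep
/-! ## Partitions of the circle and push downs -/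

/-- A finite partition of the circle into (at least two) path-connected parts,
presented on the universal cover: `2π`-periodically ordered intervals `J j`
(`j : ℤ`), with `J (j + N)` the translate of `J j`; the parts of the circle are
the images of the `J j`, and `j` reduces mod `N` to the index of the part. -/
structure CircPartition (Q : AtR) where
  N : ℕ
  hN : 2 ≤ N
  J : ℤ → Set ℝ
  nonempty : ∀ j, (J j).Nonempty
  ordconn : ∀ j, (J j).OrdConnected
  ordered : ∀ {j j' : ℤ}, j < j' → ∀ x ∈ J j, ∀ y ∈ J j', x < y
  cover : ∀ θ : ℝ, ∃ j, θ ∈ J j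
  jper : ∀ (j : ℤ) (θ : ℝ), θ ∈ J j ↔ θ + 2 * Real.pi ∈ J (j + N)

namespace CircPartition

variable {Q : AtR} (C : CircPartition Q)

/-- The index of the part containing `θ`. -/
def partIdx (θ : ℝ) : ℤ := Classical.choose (C.cover θ)

lemma mem_partIdx (θ : ℝ) : θ ∈ C.J (C.partIdx θ) := Classical.choose_spec (C.cover θ)

lemma partIdx_eq {θ : ℝ} {j : ℤ} (h : θ ∈ C.J j) : C.partIdx θ = j := by
  by_contra hne
  rcases lt_or_gt_of_ne hne with hlt | hlt
  · exact lt_irrefl θ (C.ordered hlt _ (C.mem_partIdx θ) _ h)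
  · exact lt_irrefl θ (C.ordered hlt _ h _ (C.mem_partIdx θ))

lemma partIdx_shift (θ : ℝ) : C.partIdx (θ + 2 * Real.pi) = C.partIdx θ + C.N :=
  C.partIdx_eq ((C.jper _ _).mp (C.mem_partIdx θ))

/-- The index of the part containing `θ`, as a vertex of the auxiliary quiver. -/
def partZ (θ : ℝ) : ZMod C.N := ((C.partIdx θ : ℤ) : ZMod C.N)

lemma partZ_shift (θ : ℝ) : C.partZ (θ + 2 * Real.pi) = C.partZ θ := by
  unfold partZ
  rw [C.partIdx_shift θ]
  push_cast
  simp

lemma partZ_congr {θ φ : ℝ} (hp : C.partIdx θ = C.partIdx φ) : C.partZ θ = C.partZ φ := by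
  unfold partZ; rw [hp]

lemma partZ_succ {θ φ : ℝ} (hp : C.partIdx φ = C.partIdx θ + 1) :
    C.partZ θ + 1 = C.partZ φ := by
  unfold partZ; rw [hp]; push_cast; ring

lemma partZ_pred {θ φ : ℝ} (hp : C.partIdx θ = C.partIdx φ + 1) :
    C.partZ θ = C.partZ φ + 1 := by
  unfold partZ; rw [hp]; push_cast; ring

/-- There is an arrow from the part of `J j` to the part of `J (j+1)` in the
auxiliary quiver (their union being automatically path-connected). -/
def dirUp (j : ℤ) : Prop := ∃ x ∈ C.J j, ∃ y ∈ C.J (j + 1), Q.covRel x y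

/-- There is an arrow from the part of `J (j+1)` to the part of `J j`. -/
def dirDown (j : ℤ) : Prop := ∃ x ∈ C.J (j + 1), ∃ y ∈ C.J j, Q.covRel x y

end CircPartition

namespace SRep

variable {k : Type} [Field k] {Q : AtR}

/-- `U` is the push down to the continuous quiver of the representation `A` of the
auxiliary `Ã_{N-1}` quiver of the partition `C` (with orientation `o`):
`U` is constant equal to `A.M i` on the `i`-th part, with identity maps within a
part, the maps of `A` across boundaries of parts, and the evident periodicity. -/
def PushdownOf (C : CircPartition Q) (o : ZMod C.N → Bool) (A : CycRep k C.N o)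
    (U : SRep k Q) : Prop :=
  ∃ e : ∀ θ, U.obj θ ≃ₗ[k] A.M (C.partZ θ),
    (∀ {θ φ : ℝ} (h : Q.covRel θ φ) (hp : C.partIdx θ = C.partIdx φ) (v : U.obj θ),
        e φ (U.map h v) = A.castM (C.partZ_congr hp) (e θ v)) ∧
    (∀ {θ φ : ℝ} (h : Q.covRel θ φ) (hp : C.partIdx φ = C.partIdx θ + 1)
        (ht : o (C.partZ θ) = true) (v : U.obj θ),
        e φ (U.map h v) = A.castM (C.partZ_succ hp) (A.up (C.partZ θ) ht (e θ v))) ∧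
    (∀ {θ φ : ℝ} (h : Q.covRel θ φ) (hp : C.partIdx θ = C.partIdx φ + 1)
        (hf : o (C.partZ φ) = false) (v : U.obj θ),
        e φ (U.map h v) = A.down (C.partZ φ) hf (A.castM (C.partZ_pred hp) (e θ v))) ∧
    (∀ (θ : ℝ) (v : U.obj (θ + 2 * Real.pi)),
        e θ (U.per θ v) = A.castM (C.partZ_shift θ) (e (θ + 2 * Real.pi) v))

/-- Transport between the values of `V` at representative points whose indices
agree modulo the period, using the periodicity isomorphism if needed. -/
def ptBridge (V : SRep k Q) (pt : ℤ → ℝ) (Nn : ℕ)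
    (hper : ∀ j : ℤ, pt (j + (Nn : ℤ)) = pt j + 2 * Real.pi) {a b : ℤ}
    (h : a = b ∨ a = b + (Nn : ℤ)) : V.obj (pt a) ≃ₗ[k] V.obj (pt b) :=
  if he : a = b then V.castO (congrArg pt he)
  else (V.castO (show pt a = pt b + 2 * Real.pi by
      rw [h.resolve_left he]; exact hper b)).trans (V.per (pt b))

lemma zmod_val_succ {N : ℕ} (hN : 2 ≤ N) (i : ZMod N) :
    (((i + 1 : ZMod N).val : ℤ) = (i.val : ℤ) + 1) ∨
      ((i.val : ℤ) + 1 = ((i + 1 : ZMod N).val : ℤ) + (N : ℤ)) := by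
  haveI : NeZero N := ⟨by omega⟩
  haveI : Fact (1 < N) := ⟨by omega⟩
  have hval : (i + 1 : ZMod N).val = (i.val + 1) % N := by
    rw [ZMod.val_add, ZMod.val_one]
  have hlt : i.val < N := ZMod.val_lt i
  rcases Nat.lt_or_ge (i.val + 1) N with h | h
  · left; rw [hval, Nat.mod_eq_of_lt h]; push_cast; ring
  · right
    have he : i.val + 1 = N := by omega
    rw [hval, he, Nat.mod_self]
    push_cast
    omega

/-- The auxiliary representation `M_V` of the auxiliary quiver of a partition `C`,
given by the values of `V` at the representative points `pt`. -/
def auxOfPoints (V : SRep k Q) (C : CircPartition Q) (o : ZMod C.N → Bool) (pt : ℤ → ℝ)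
    (hper : ∀ j : ℤ, pt (j + (C.N : ℤ)) = pt j + 2 * Real.pi)
    (hup : ∀ (i : ZMod C.N), o i = true → Q.covRel (pt (i.val : ℤ)) (pt ((i.val : ℤ) + 1)))
    (hdown : ∀ (i : ZMod C.N), o i = false → Q.covRel (pt ((i.val : ℤ) + 1)) (pt (i.val : ℤ))) :
    CycRep k C.N o where
  M i := V.obj (pt (i.val : ℤ))
  up i h := (V.ptBridge pt C.N hper
      ((zmod_val_succ C.hN i).imp Eq.symm id)).toLinearMap ∘ₗ V.map (hup i h)
  down i h := V.map (hdown i h) ∘ₗ (V.ptBridge pt C.N hper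
      ((zmod_val_succ C.hN i).imp Eq.symm id)).symm.toLinearMap

/-- `U` is the refinement of `V` with respect to the partition `C` and the choice
of representative points `pt`: `U(θ) = V(pt (partIdx θ))`, with structure maps
induced by those of `V` between representative points. -/
def RefinementOf (V : SRep k Q) (C : CircPartition Q) (pt : ℤ → ℝ)
    (hper : ∀ j : ℤ, pt (j + (C.N : ℤ)) = pt j + 2 * Real.pi) (U : SRep k Q) : Prop :=
  (∀ j, pt j ∈ C.J j) ∧
  ∃ e : ∀ θ, U.obj θ ≃ₗ[k] V.obj (pt (C.partIdx θ)),
    (∀ {θ φ : ℝ} (h : Q.covRel θ φ) (hp : C.partIdx θ = C.partIdx φ) (v : U.obj θ),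
        e φ (U.map h v) = V.castO (congrArg pt hp) (e θ v)) ∧
    (∀ {θ φ : ℝ} (h : Q.covRel θ φ)
        (hc : Q.covRel (pt (C.partIdx θ)) (pt (C.partIdx φ))) (v : U.obj θ),
        e φ (U.map h v) = V.map hc (e θ v)) ∧
    (∀ (θ : ℝ) (v : U.obj (θ + 2 * Real.pi)),
        e θ (U.per θ v) = V.per (pt (C.partIdx θ))
          ((V.castO (show pt (C.partIdx (θ + 2 * Real.pi)) = pt (C.partIdx θ) + 2 * Real.pi by
            rw [C.partIdx_shift θ]; exact hper _)) (e (θ + 2 * Real.pi) v)))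

end SRep
/-! ## The endomorphism ring -/

namespace SRep

variable {k : Type} [Field k] {Q : AtR}

/-- The endomorphism ring of a representation: the subring of
`∀ θ, End (V θ)` consisting of the natural families (with multiplication given by
pointwise composition). -/
def endSubring (V : SRep k Q) : Subring (∀ θ, Module.End k (V.obj θ)) where
  carrier := {f | IsHomFam V V f}
  mul_mem' := by
    rintro a b ⟨ha1, ha2⟩ ⟨hb1, hb2⟩
    constructor
    · intro θ φ h v
      simp only [Pi.mul_apply, Module.End.mul_apply]
      rw [hb1 h v, ha1 h]
    · intro θ v
      simp only [Pi.mul_apply, Module.End.mul_apply]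
      rw [hb2 θ v, ha2 θ]
  one_mem' := by
    constructor
    · intro θ φ h v; simp
    · intro θ v; simp
  add_mem' := by
    rintro a b ⟨ha1, ha2⟩ ⟨hb1, hb2⟩
    constructor
    · intro θ φ h v
      simp only [Pi.add_apply, LinearMap.add_apply]
      rw [ha1 h v, hb1 h v, map_add]
    · intro θ v
      simp only [Pi.add_apply, LinearMap.add_apply]
      rw [ha2 θ v, hb2 θ v, map_add]
  zero_mem' := by
    constructor
    · intro θ φ h v; simp
    · intro θ v; simp
  neg_mem' := by
    rintro a ⟨ha1, ha2⟩
    constructor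
    · intro θ φ h v
      simp only [Pi.neg_apply, LinearMap.neg_apply]
      rw [ha1 h v, map_neg]
    · intro θ v
      simp only [Pi.neg_apply, LinearMap.neg_apply]
      rw [ha2 θ v, map_neg]

end SRep

/-! ## Auxiliary lemmas for the push down theorem -/

namespace PushAux

open SRep CycRep

variable {k : Type} [Field k] {Q : AtR}

lemma per' (Q : AtR) (j : ℤ) : Q.α (j + (Q.periodN : ℤ)) = Q.α j + 2 * Real.pi := by
  unfold AtR.periodN
  split_ifs with hm
  · rw [Q.cyc hm, Q.cyc hm]; push_cast; ring
  · have := Q.per hm j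
    rw [← this]
    norm_cast

lemma key_above (Q : AtR) : ∀ t : ℕ, Q.α ((Q.periodN : ℤ) * t) = Q.α 0 + 2 * Real.pi * t
  | 0 => by simp
  | (t+1) => by
      have h1 := per' Q ((Q.periodN : ℤ) * t)
      have h2 := key_above Q t
      have he : ((Q.periodN : ℤ) * ((t+1 : ℕ) : ℤ)) = (Q.periodN : ℤ) * t + Q.periodN := by
        push_cast; ring
      rw [he, h1, h2]; push_cast; ring

lemma key_below (Q : AtR) : ∀ t : ℕ, Q.α (-((Q.periodN : ℤ) * t)) = Q.α 0 - 2 * Real.pi * t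
  | 0 => by simp
  | (t+1) => by
      have h1 := per' Q (-((Q.periodN : ℤ) * (t+1)))
      have h2 := key_below Q t
      have he : -((Q.periodN : ℤ) * ((t:ℤ)+1)) + Q.periodN = -((Q.periodN : ℤ) * t) := by ring
      rw [he] at h1
      have he2 : -((Q.periodN : ℤ) * (((t+1) : ℕ) : ℤ)) = -((Q.periodN : ℤ) * ((t:ℤ)+1)) := by
        push_cast; ring
      rw [he2]
      have : Q.α (-((Q.periodN : ℤ) * ((t:ℤ)+1))) = Q.α (-((Q.periodN : ℤ) * t)) - 2 * Real.pi := by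
        linarith [h1]
      rw [this, h2]
      push_cast; ring

lemma unbounded_above (Q : AtR) (x : ℝ) : ∃ j : ℤ, x < Q.α j := by
  obtain ⟨t, ht⟩ := exists_nat_gt ((x - Q.α 0) / (2 * Real.pi))
  refine ⟨(Q.periodN : ℤ) * t, ?_⟩
  rw [key_above]
  have h2π : (0:ℝ) < 2 * Real.pi := by positivity
  rw [div_lt_iff₀ h2π] at ht
  nlinarith [ht]

lemma unbounded_below (Q : AtR) (x : ℝ) : ∃ j : ℤ, Q.α j ≤ x := by
  obtain ⟨t, ht⟩ := exists_nat_gt ((Q.α 0 - x) / (2 * Real.pi))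
  refine ⟨-((Q.periodN : ℤ) * t), ?_⟩
  rw [key_below]
  have h2π : (0:ℝ) < 2 * Real.pi := by positivity
  rw [div_lt_iff₀ h2π] at ht
  nlinarith [ht]

lemma exists_arc (Q : AtR) (x : ℝ) : ∃ j : ℤ, x ∈ Set.Icc (Q.α j) (Q.α (j+1)) := by
  obtain ⟨b, hb⟩ := unbounded_above Q x
  obtain ⟨a, ha⟩ := unbounded_below Q x
  obtain ⟨j, hj, hmax⟩ := Int.exists_greatest_of_bdd (P := fun j => Q.α j ≤ x)
    ⟨b, fun z hz => le_of_lt (Q.mono.lt_iff_lt.mp (lt_of_le_of_lt hz hb))⟩ ⟨a, ha⟩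
  refine ⟨j, hj, ?_⟩
  by_contra hc
  push_neg at hc
  have := hmax (j+1) (le_of_lt hc)
  omega

lemma covRel_or {Q : AtR} {θ φ : ℝ} {j : ℤ} (hθ : θ ∈ Set.Icc (Q.α j) (Q.α (j+1)))
    (hφ : φ ∈ Set.Icc (Q.α j) (Q.α (j+1))) (hle : θ ≤ φ) :
    Q.covRel θ φ ∨ Q.covRel φ θ := by
  unfold AtR.covRel
  by_cases hm : Q.m = 0
  · left; rw [if_pos hm]; exact hle
  · rw [if_neg hm, if_neg hm]
    rcases Int.even_or_odd j with he | hov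
    · right; exact ⟨j, hφ, hθ, Or.inl ⟨he, hle⟩⟩
    · left; exact ⟨j, hθ, hφ, Or.inr ⟨Int.not_even_iff_odd.mpr hov, hle⟩⟩

section CastM

variable {N : ℕ} {o' : ZMod N → Bool} (A : CycRep k N o')

lemma castM_trans {i j l : ZMod N} (h1 : i = j) (h2 : j = l) (v : A.M i) :
    A.castM h2 (A.castM h1 v) = A.castM (h1.trans h2) v := by subst h1; subst h2; rfl

lemma castM_cancel {i j : ZMod N} (h : i = j) (v : A.M j) :
    A.castM h (A.castM h.symm v) = v := by subst h; rfl

lemma castM_symm_apply {i j : ZMod N} (h : i = j) (v : A.M j) :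
    (A.castM h).symm v = A.castM h.symm v := by subst h; rfl

lemma up_castM {i j : ZMod N} (h : i = j) (h1 : i + 1 = j + 1)
    (hi : o' i = true) (hj : o' j = true) (v : A.M i) :
    A.castM h1 (A.up i hi v) = A.up j hj (A.castM h v) := by subst h; rfl

lemma down_castM {i j : ZMod N} (h : i = j) (h1 : i + 1 = j + 1)
    (hi : o' i = false) (hj : o' j = false) (v : A.M (i + 1)) :
    A.castM h (A.down i hi v) = A.down j hj (A.castM h1 v) := by subst h; rfl

end CastM

end PushAux
namespace PushAux

open SRep CycRep

variable {k : Type} [Field k] {Q : AtR} {C : CircPartition Q} {o : ZMod C.N → Bool}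
  {M : CycRep k C.N o} {U : SRep k Q}

/-- The transported endomorphism family. -/
def Fend (e : ∀ θ, U.obj θ ≃ₗ[k] M.M (C.partZ θ)) (f : ∀ θ : ℝ, U.obj θ →ₗ[k] U.obj θ)
    (θ : ℝ) : M.M (C.partZ θ) →ₗ[k] M.M (C.partZ θ) :=
  (e θ).toLinearMap ∘ₗ f θ ∘ₗ (e θ).symm.toLinearMap

lemma Fend_apply (e : ∀ θ, U.obj θ ≃ₗ[k] M.M (C.partZ θ)) (f : ∀ θ : ℝ, U.obj θ →ₗ[k] U.obj θ)
    (θ : ℝ) (w : M.M (C.partZ θ)) : Fend e f θ w = e θ (f θ ((e θ).symm w)) := rfl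

/-- Compatibility of the transported endomorphisms at two points of the circle. -/
def Rel (e : ∀ θ, U.obj θ ≃ₗ[k] M.M (C.partZ θ)) (f : ∀ θ : ℝ, U.obj θ →ₗ[k] U.obj θ)
    (θ φ : ℝ) : Prop :=
  ∃ h : C.partZ θ = C.partZ φ,
    ∀ w, M.castM h (Fend e f θ w) = Fend e f φ (M.castM h w)

variable (e : ∀ θ, U.obj θ ≃ₗ[k] M.M (C.partZ θ)) (f : ∀ θ : ℝ, U.obj θ →ₗ[k] U.obj θ)

lemma rel_of_eq {θ φ : ℝ} (h : θ = φ) : Rel e f θ φ := by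
  subst h; exact ⟨rfl, fun w => rfl⟩

lemma rel_trans {θ ψ φ : ℝ} (h1 : Rel e f θ ψ) (h2 : Rel e f ψ φ) : Rel e f θ φ := by
  obtain ⟨ha, hA⟩ := h1
  obtain ⟨hb, hB⟩ := h2
  refine ⟨ha.trans hb, fun w => ?_⟩
  rw [← castM_trans M ha hb, hA, hB, castM_trans]

lemma rel_symm {θ φ : ℝ} (h1 : Rel e f θ φ) : Rel e f φ θ := by
  obtain ⟨ha, hA⟩ := h1
  refine ⟨ha.symm, fun w => ?_⟩
  apply (M.castM ha).injective
  rw [castM_cancel M ha (Fend e f φ w), hA, castM_cancel M ha w]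

section Nat

variable (hU1 : ∀ {θ φ : ℝ} (h : Q.covRel θ φ) (hp : C.partIdx θ = C.partIdx φ) (v : U.obj θ),
      e φ (U.map h v) = M.castM (C.partZ_congr hp) (e θ v))
  (hU4 : ∀ (θ : ℝ) (v : U.obj (θ + 2 * Real.pi)),
      e θ (U.per θ v) = M.castM (C.partZ_shift θ) (e (θ + 2 * Real.pi) v))
  (hf1 : ∀ {θ φ : ℝ} (h : Q.covRel θ φ) (v : U.obj θ), f φ (U.map h v) = U.map h (f θ v))
  (hf2 : ∀ (θ : ℝ) (v : U.obj (θ + 2 * Real.pi)), f θ (U.per θ v) = U.per θ (f (θ + 2 * Real.pi) v))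

include hU1 hf1 in
lemma rel_of_covRel {θ φ : ℝ} (hcov : Q.covRel θ φ) (hp : C.partIdx θ = C.partIdx φ) :
    Rel e f θ φ := by
  refine ⟨C.partZ_congr hp, fun w => ?_⟩
  have h2 : M.castM (C.partZ_congr hp) w = e φ (U.map hcov ((e θ).symm w)) := by
    rw [hU1 hcov hp ((e θ).symm w), LinearEquiv.apply_symm_apply]
  rw [Fend_apply, Fend_apply, h2, LinearEquiv.symm_apply_apply, hf1 hcov,
    hU1 hcov hp]

include hU4 hf2 in
lemma rel_shift (θ : ℝ) : Rel e f (θ + 2 * Real.pi) θ := by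
  refine ⟨C.partZ_shift θ, fun w => ?_⟩
  set v := (e (θ + 2 * Real.pi)).symm w with hv
  have hw : M.castM (C.partZ_shift θ) w = e θ (U.per θ v) := by
    rw [hU4 θ v, hv, LinearEquiv.apply_symm_apply]
  rw [Fend_apply, Fend_apply, hw, LinearEquiv.symm_apply_apply, hf2 θ,
    hU4 θ (f (θ + 2 * Real.pi) v)]

include hU1 hf1 in
lemma rel_sameArc {θ φ : ℝ} {n : ℤ} (hθ : θ ∈ Set.Icc (Q.α n) (Q.α (n+1)))
    (hφ : φ ∈ Set.Icc (Q.α n) (Q.α (n+1))) (hle : θ ≤ φ)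
    (hp : C.partIdx θ = C.partIdx φ) : Rel e f θ φ := by
  rcases covRel_or hθ hφ hle with hc | hc
  · exact rel_of_covRel e f hU1 hf1 hc hp
  · exact rel_symm e f (rel_of_covRel e f hU1 hf1 hc hp.symm)

include hU1 hf1 in
lemma rel_samePart_le {θ φ : ℝ} (hle : θ ≤ φ) (hp : C.partIdx θ = C.partIdx φ) :
    Rel e f θ φ := by
  obtain ⟨n0, hn0⟩ := exists_arc Q θ
  obtain ⟨b, hb⟩ := unbounded_above Q φ
  have hd0 : ∃ d : ℕ, φ ≤ Q.α (n0 + 1 + (d:ℤ)) := by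
    refine ⟨(b - (n0+1)).toNat, le_of_lt (lt_of_lt_of_le hb (Q.mono.monotone ?_))⟩
    omega
  obtain ⟨d, hdle⟩ := hd0
  have ind : ∀ d : ℕ, ∀ (θ : ℝ) (n : ℤ), θ ∈ Set.Icc (Q.α n) (Q.α (n+1)) → θ ≤ φ →
      C.partIdx θ = C.partIdx φ → φ ≤ Q.α (n + 1 + (d:ℤ)) → Rel e f θ φ := by
    intro d
    induction d with
    | zero =>
      intro θ n hn hle hp hdle
      have hφn : φ ∈ Set.Icc (Q.α n) (Q.α (n+1)) :=
        ⟨le_trans hn.1 hle, by simpa using hdle⟩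
      exact rel_sameArc e f hU1 hf1 hn hφn hle hp
    | succ d ih =>
      intro θ n hn hle hp hdle
      by_cases hc : φ ≤ Q.α (n+1)
      · exact rel_sameArc e f hU1 hf1 hn ⟨le_trans hn.1 hle, hc⟩ hle hp
      · push_neg at hc
        have hψmem : Q.α (n+1) ∈ C.J (C.partIdx θ) :=
          (C.ordconn _).out (C.mem_partIdx θ)
            (by rw [hp]; exact C.mem_partIdx φ) ⟨hn.2, le_of_lt hc⟩
        have hpψ : C.partIdx (Q.α (n+1)) = C.partIdx θ := C.partIdx_eq hψmem
        have r1 : Rel e f θ (Q.α (n+1)) :=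
          rel_sameArc e f hU1 hf1 hn ⟨Q.mono.monotone (by omega), le_rfl⟩ hn.2
            (by rw [hpψ])
        have r2 : Rel e f (Q.α (n+1)) φ := by
          refine ih (Q.α (n+1)) (n+1) ⟨le_rfl, Q.mono.monotone (by omega)⟩
            (le_of_lt hc) (by rw [hpψ, hp]) ?_
          have hidx : (n+1) + 1 + (d:ℤ) = n + 1 + (((d+1) : ℕ) : ℤ) := by push_cast; ring
          rw [hidx]
          exact hdle
        exact rel_trans e f r1 r2
  exact ind d θ n0 hn0 hle hp hdle

include hU1 hf1 in
lemma rel_samePart {θ φ : ℝ} (hp : C.partIdx θ = C.partIdx φ) : Rel e f θ φ := by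
  rcases le_total θ φ with h | h
  · exact rel_samePart_le e f hU1 hf1 h hp
  · exact rel_symm e f (rel_samePart_le e f hU1 hf1 h hp.symm)

include hU1 hU4 hf1 hf2 in
lemma rel_chain (s : ℕ) (θ : ℝ) :
    Rel e f θ (θ + 2 * Real.pi * s) ∧
      C.partIdx (θ + 2 * Real.pi * s) = C.partIdx θ + (C.N : ℤ) * s := by
  induction s with
  | zero => exact ⟨rel_of_eq e f (by push_cast; ring), by push_cast; simp⟩
  | succ s ih =>
    have heq : θ + 2 * Real.pi * ((s+1 : ℕ) : ℝ) = (θ + 2 * Real.pi * s) + 2 * Real.pi := by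
      push_cast; ring
    constructor
    · refine rel_trans e f ih.1 (rel_trans e f
        (rel_symm e f (rel_shift e f hU4 hf2 (θ + 2 * Real.pi * s)))
        (rel_of_eq e f heq.symm))
    · rw [heq, C.partIdx_shift, ih.2]; push_cast; ring

include hU1 hU4 hf1 hf2 in
lemma rel_partZ_eq {θ φ : ℝ} (hz : C.partZ θ = C.partZ φ) : Rel e f θ φ := by
  have hmod : (C.N : ℤ) ∣ C.partIdx φ - C.partIdx θ :=
    Int.ModEq.dvd ((ZMod.intCast_eq_intCast_iff _ _ _).mp hz)
  obtain ⟨t, ht⟩ := hmod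
  have main : ∀ (θ φ : ℝ) (s : ℕ), C.partIdx φ = C.partIdx θ + (C.N : ℤ) * s → Rel e f θ φ := by
    intro θ φ s hs
    have h1 := rel_chain e f hU1 hU4 hf1 hf2 s θ
    exact rel_trans e f h1.1 (rel_samePart e f hU1 hf1 (by rw [h1.2, hs]))
  rcases le_or_gt 0 t with hts | hts
  · refine main θ φ t.toNat ?_
    rw [Int.toNat_of_nonneg hts]; omega
  · refine rel_symm e f (main φ θ (-t).toNat ?_)
    rw [Int.toNat_of_nonneg (by omega)]
    have : (C.N : ℤ) * -t = -((C.N:ℤ) * t) := by ring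
    omega

end Nat

end PushAux
/-! ## Statement 7 -/

/-- If the auxiliary quiver of the partition `C` is the `Ã_{N-1}` quiver with
orientation `o` and `M` is an indecomposable finite-dimensional representation of
it, then its push down is an indecomposable representation of the continuous
quiver. -/
theorem pushdown_indecomposable {k : Type} [Field k] {Q : AtR} (C : CircPartition Q)
    (o : ZMod C.N → Bool)
    (ho : ∀ j : ℤ, ((o (j : ZMod C.N) = true) ↔ C.dirUp j) ∧
      ((o (j : ZMod C.N) = false) ↔ C.dirDown j))
    (M : CycRep k C.N o) (hfd : ∀ i, FiniteDimensional k (M.M i))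
    (hM : CycRep.Indecomposable M)
    (U : SRep k Q) (hU : SRep.PushdownOf C o M U) : SRep.Indecomposable U := by
  classical
  obtain ⟨e, hU1, hU2, hU3, hU4⟩ := hU
  haveI : NeZero C.N := ⟨by have := C.hN; omega⟩
  have hcv : ∀ i : ZMod C.N, (((i.val : ℤ)) : ZMod C.N) = i := by
    intro i; push_cast; exact ZMod.natCast_rightInverse i
  have hθpt : ∀ i : ZMod C.N, (C.nonempty ((i.val : ℤ))).choose ∈ C.J ((i.val : ℤ)) :=
    fun i => (C.nonempty _).choose_spec
  set θpt : ZMod C.N → ℝ := fun i => (C.nonempty ((i.val : ℤ))).choose with hθptdef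
  have hpZ : ∀ i, C.partZ (θpt i) = i := by
    intro i
    show ((C.partIdx (θpt i) : ℤ) : ZMod C.N) = i
    rw [C.partIdx_eq (hθpt i)]
    exact hcv i
  constructor
  · -- U is nonzero
    obtain ⟨i, v, hv⟩ := hM.1
    refine ⟨θpt i, (e (θpt i)).symm (M.castM (hpZ i).symm v), ?_⟩
    intro hc
    apply hv
    have h1 : M.castM (hpZ i).symm v = 0 := by
      have h2 := congrArg (e (θpt i)) hc
      rwa [LinearEquiv.apply_symm_apply, map_zero] at h2
    have h3 := congrArg (M.castM (hpZ i)) h1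
    rwa [PushAux.castM_cancel, map_zero] at h3
  · intro A B hA hB hiso
    obtain ⟨eAB, hn1, hn2⟩ := hiso
    -- the idempotent on U projecting onto the A-summand
    set f : ∀ θ : ℝ, U.obj θ →ₗ[k] U.obj θ := fun θ =>
      (eAB θ).symm.toLinearMap ∘ₗ
        ((LinearMap.prodMap (LinearMap.id : A.obj θ →ₗ[k] A.obj θ)
          (0 : B.obj θ →ₗ[k] B.obj θ)) : (A.prod B).obj θ →ₗ[k] (A.prod B).obj θ) ∘ₗ (eAB θ).toLinearMap with hfdef
    have hfapp : ∀ (θ : ℝ) (v : U.obj θ),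
        f θ v = (eAB θ).symm (((eAB θ v).1, 0) : (A.prod B).obj θ) := by
      intro θ v; rw [hfdef]; rfl
    have hABmap : ∀ {θ φ : ℝ} (h : Q.covRel θ φ) (p : A.obj θ × B.obj θ),
        (A.prod B).map h p = (A.map h p.1, B.map h p.2) := fun _ _ => rfl
    have hABper : ∀ (θ : ℝ) (p : A.obj (θ + 2*Real.pi) × B.obj (θ + 2*Real.pi)),
        (A.prod B).per θ p = (A.per θ p.1, B.per θ p.2) := fun _ _ => rfl
    have hf1 : ∀ {θ φ : ℝ} (h : Q.covRel θ φ) (v : U.obj θ),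
        f φ (U.map h v) = U.map h (f θ v) := by
      intro θ φ h v
      apply (eAB φ).injective
      simp only [hfapp, hn1 h]
      erw [LinearEquiv.apply_symm_apply, LinearEquiv.apply_symm_apply]
      exact Prod.ext rfl (map_zero (B.map h)).symm
    have hf2 : ∀ (θ : ℝ) (v : U.obj (θ + 2 * Real.pi)),
        f θ (U.per θ v) = U.per θ (f (θ + 2 * Real.pi) v) := by
      intro θ v
      apply (eAB θ).injective
      simp only [hfapp, hn2 θ]
      erw [LinearEquiv.apply_symm_apply, LinearEquiv.apply_symm_apply]
      exact Prod.ext rfl (map_zero (B.per θ)).symm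
    have hfidem : ∀ (θ : ℝ) (v : U.obj θ), f θ (f θ v) = f θ v := by
      intro θ v
      simp only [hfapp]
      erw [LinearEquiv.apply_symm_apply]
    -- the induced idempotent on M
    set g : ∀ i : ZMod C.N, M.M i →ₗ[k] M.M i := fun i =>
      (M.castM (hpZ i)).toLinearMap ∘ₗ PushAux.Fend e f (θpt i) ∘ₗ
        (M.castM (hpZ i)).symm.toLinearMap with hgdef
    have g_spec : ∀ (θ : ℝ) (i : ZMod C.N) (h : C.partZ θ = i) (w : M.M (C.partZ θ)),
        g i (M.castM h w) = M.castM h (PushAux.Fend e f θ w) := by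
      intro θ i h w
      obtain ⟨h', hrel⟩ := PushAux.rel_partZ_eq e f hU1 hU4 hf1 hf2
        (show C.partZ θ = C.partZ (θpt i) from h.trans (hpZ i).symm)
      have hrel2 : ∀ w, M.castM (h.trans (hpZ i).symm) (PushAux.Fend e f θ w)
          = PushAux.Fend e f (θpt i) (M.castM (h.trans (hpZ i).symm) w) := hrel
      rw [hgdef]
      show M.castM (hpZ i) (PushAux.Fend e f (θpt i)
        ((M.castM (hpZ i)).symm (M.castM h w))) = _
      rw [PushAux.castM_symm_apply, PushAux.castM_trans, ← hrel2, PushAux.castM_trans]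
    have hFidem : ∀ (θ : ℝ) (w : M.M (C.partZ θ)),
        PushAux.Fend e f θ (PushAux.Fend e f θ w) = PushAux.Fend e f θ w := by
      intro θ w
      simp only [PushAux.Fend_apply]
      rw [LinearEquiv.symm_apply_apply, hfidem]
    have hg_idem : ∀ (i : ZMod C.N) (w : M.M i), g i (g i w) = g i w := by
      intro i w
      have h1 : M.castM (hpZ i) (M.castM (hpZ i).symm w) = w := PushAux.castM_cancel _ _ _
      calc g i (g i w)
          = g i (g i (M.castM (hpZ i) (M.castM (hpZ i).symm w))) := by rw [h1]
        _ = g i (M.castM (hpZ i)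
              (PushAux.Fend e f (θpt i) (M.castM (hpZ i).symm w))) := by
            rw [g_spec (θpt i) i (hpZ i)]
        _ = M.castM (hpZ i) (PushAux.Fend e f (θpt i)
              (PushAux.Fend e f (θpt i) (M.castM (hpZ i).symm w))) := by
            rw [g_spec (θpt i) i (hpZ i)]
        _ = M.castM (hpZ i) (PushAux.Fend e f (θpt i) (M.castM (hpZ i).symm w)) := by
            rw [hFidem]
        _ = g i w := by rw [← g_spec (θpt i) i (hpZ i), h1]
    have hg_up : ∀ (i : ZMod C.N) (hi : o i = true) (w : M.M i),
        g (i+1) (M.up i hi w) = M.up i hi (g i w) := by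
      intro i hi w
      obtain ⟨x, hx, y, hy, hxy⟩ := (ho (i.val : ℤ)).1.mp (by rw [hcv i]; exact hi)
      have hpx : C.partIdx x = (i.val : ℤ) := C.partIdx_eq hx
      have hpy : C.partIdx y = (i.val : ℤ) + 1 := C.partIdx_eq hy
      have pZx : C.partZ x = i := by
        show ((C.partIdx x : ℤ) : ZMod C.N) = i
        rw [hpx]; exact hcv i
      have pZy : C.partZ y = i + 1 := by
        show ((C.partIdx y : ℤ) : ZMod C.N) = i + 1
        rw [hpy]; push_cast
        rw [ZMod.natCast_rightInverse i]
      have hp : C.partIdx y = C.partIdx x + 1 := by rw [hpx, hpy]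
      have ht : o (C.partZ x) = true := by rw [pZx]; exact hi
      have cross : ∀ w0 : M.M (C.partZ x),
          PushAux.Fend e f y (M.castM (C.partZ_succ hp) (M.up (C.partZ x) ht w0))
            = M.castM (C.partZ_succ hp) (M.up (C.partZ x) ht (PushAux.Fend e f x w0)) := by
        intro w0
        have k1 : M.castM (C.partZ_succ hp) (M.up (C.partZ x) ht w0)
            = e y (U.map hxy ((e x).symm w0)) := by
          rw [hU2 hxy hp ht ((e x).symm w0), LinearEquiv.apply_symm_apply]
        rw [PushAux.Fend_apply, k1, LinearEquiv.symm_apply_apply, hf1 hxy,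
          hU2 hxy hp ht]
        rfl
      have succ1 : C.partZ x + 1 = i + 1 := by rw [pZx]
      set w0 : M.M (C.partZ x) := M.castM pZx.symm w with hw0def
      have hww : M.castM pZx w0 = w := PushAux.castM_cancel _ _ _
      have key1 : M.up i hi w = M.castM succ1 (M.up (C.partZ x) ht w0) := by
        rw [PushAux.up_castM M pZx succ1 ht hi w0, hww]
      have split1 : M.castM succ1 (M.up (C.partZ x) ht w0)
          = M.castM pZy (M.castM (C.partZ_succ hp) (M.up (C.partZ x) ht w0)) := by
        rw [PushAux.castM_trans]
      rw [key1, split1, g_spec y (i+1) pZy, cross w0, PushAux.castM_trans,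
        ← hww, g_spec x i pZx,
        ← PushAux.up_castM M pZx succ1 ht hi (PushAux.Fend e f x w0)]
    have hg_down : ∀ (i : ZMod C.N) (hi : o i = false) (w : M.M (i+1)),
        g i (M.down i hi w) = M.down i hi (g (i+1) w) := by
      intro i hi w
      obtain ⟨x, hx, y, hy, hxy⟩ := (ho (i.val : ℤ)).2.mp (by rw [hcv i]; exact hi)
      have hpx : C.partIdx x = (i.val : ℤ) + 1 := C.partIdx_eq hx
      have hpy : C.partIdx y = (i.val : ℤ) := C.partIdx_eq hy
      have pZx : C.partZ x = i + 1 := by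
        show ((C.partIdx x : ℤ) : ZMod C.N) = i + 1
        rw [hpx]; push_cast
        rw [ZMod.natCast_rightInverse i]
      have pZy : C.partZ y = i := by
        show ((C.partIdx y : ℤ) : ZMod C.N) = i
        rw [hpy]; exact hcv i
      have hp : C.partIdx x = C.partIdx y + 1 := by rw [hpx, hpy]
      have hfo : o (C.partZ y) = false := by rw [pZy]; exact hi
      have cross : ∀ w0 : M.M (C.partZ x),
          PushAux.Fend e f y (M.down (C.partZ y) hfo (M.castM (C.partZ_pred hp) w0))
            = M.down (C.partZ y) hfo (M.castM (C.partZ_pred hp)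
                (PushAux.Fend e f x w0)) := by
        intro w0
        have k1 : M.down (C.partZ y) hfo (M.castM (C.partZ_pred hp) w0)
            = e y (U.map hxy ((e x).symm w0)) := by
          rw [hU3 hxy hp hfo ((e x).symm w0), LinearEquiv.apply_symm_apply]
        rw [PushAux.Fend_apply, k1, LinearEquiv.symm_apply_apply, hf1 hxy,
          hU3 hxy hp hfo]
        rfl
      have succ1 : C.partZ y + 1 = i + 1 := by rw [pZy]
      set w0 : M.M (C.partZ x) := M.castM pZx.symm w with hw0def
      have hww : M.castM pZx w0 = w := PushAux.castM_cancel _ _ _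
      have key1 : M.down i hi w
          = M.castM pZy (M.down (C.partZ y) hfo (M.castM (C.partZ_pred hp) w0)) := by
        rw [PushAux.down_castM M pZy succ1 hfo hi (M.castM (C.partZ_pred hp) w0),
          PushAux.castM_trans, ← hww]
      rw [key1, g_spec y i pZy, cross w0,
        PushAux.down_castM M pZy succ1 hfo hi
          (M.castM (C.partZ_pred hp) (PushAux.Fend e f x w0)),
        PushAux.castM_trans, ← hww, g_spec x (i+1) pZx]
    -- nonzero witnesses
    obtain ⟨θA, a, ha⟩ := hA
    obtain ⟨θB, b, hb⟩ := hB
    set uA : U.obj θA := (eAB θA).symm (a, 0) with huAdef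
    have hfA : f θA uA = uA := by
      rw [hfapp, huAdef]; erw [LinearEquiv.apply_symm_apply]
    have huA : uA ≠ 0 := by
      intro hc
      apply ha
      have h2 := congrArg (eAB θA) hc
      rw [huAdef] at h2; erw [LinearEquiv.apply_symm_apply, map_zero] at h2
      exact congrArg Prod.fst h2
    set uB : U.obj θB := (eAB θB).symm (0, b) with huBdef
    have hfB : f θB uB = 0 := by
      rw [hfapp, huBdef]; erw [LinearEquiv.apply_symm_apply]
      exact map_zero _
    have huB : uB ≠ 0 := by
      intro hc
      apply hb
      have h2 := congrArg (eAB θB) hc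
      rw [huBdef] at h2; erw [LinearEquiv.apply_symm_apply, map_zero] at h2
      exact congrArg Prod.snd h2
    have hgA : g (C.partZ θA) (e θA uA) = e θA uA := by
      have h0 := g_spec θA (C.partZ θA) rfl (e θA uA)
      rw [PushAux.Fend_apply, LinearEquiv.symm_apply_apply, hfA] at h0
      exact h0
    have hgB : g (C.partZ θB) (e θB uB) = 0 := by
      have h0 := g_spec θB (C.partZ θB) rfl (e θB uB)
      rw [PushAux.Fend_apply, LinearEquiv.symm_apply_apply, hfB, map_zero] at h0
      exact h0
    have heA : e θA uA ≠ 0 := by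
      intro hc
      apply huA
      have h2 := congrArg (e θA).symm hc
      rwa [LinearEquiv.symm_apply_apply, map_zero] at h2
    have heB : e θB uB ≠ 0 := by
      intro hc
      apply huB
      have h2 := congrArg (e θB).symm hc
      rwa [LinearEquiv.symm_apply_apply, map_zero] at h2
    -- the decomposition of M
    have hfix : ∀ (i : ZMod C.N) (x : M.M i), x ∈ LinearMap.range (g i) → g i x = x := by
      rintro i x ⟨y, rfl⟩; exact hg_idem i y
    let MR : CycRep k C.N o :=
      { M := fun i => ↥(LinearMap.range (g i))
        up := fun i h => (M.up i h).restrict (fun x hx => by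
          refine ⟨M.up i h x, ?_⟩
          rw [hg_up i h x, hfix i x hx])
        down := fun i h => (M.down i h).restrict (fun x hx => by
          refine ⟨M.down i h x, ?_⟩
          rw [hg_down i h x, hfix (i+1) x hx]) }
    let MK : CycRep k C.N o :=
      { M := fun i => ↥(LinearMap.ker (g i))
        up := fun i h => (M.up i h).restrict (fun x hx => by
          rw [LinearMap.mem_ker] at hx ⊢
          rw [hg_up i h x, hx, map_zero])
        down := fun i h => (M.down i h).restrict (fun x hx => by
          rw [LinearMap.mem_ker] at hx ⊢
          rw [hg_down i h x, hx, map_zero]) }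
    let eS : ∀ i : ZMod C.N, M.M i ≃ₗ[k] (MR.prod MK).M i := fun i =>
      { toFun := fun v => (⟨g i v, ⟨v, rfl⟩⟩, ⟨v - g i v, by
            rw [LinearMap.mem_ker, map_sub, hg_idem, sub_self]⟩)
        map_add' := fun v w => by
          refine Prod.ext (Subtype.ext ?_) (Subtype.ext ?_)
          · show g i (v + w) = g i v + g i w
            exact map_add _ _ _
          · show (v + w) - g i (v + w) = (v - g i v) + (w - g i w)
            rw [map_add]; abel
        map_smul' := fun c v => by
          refine Prod.ext (Subtype.ext ?_) (Subtype.ext ?_)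
          · show g i (c • v) = c • g i v
            exact map_smul _ _ _
          · show (c • v) - g i (c • v) = c • (v - g i v)
            rw [map_smul, smul_sub]
        invFun := fun p => (p.1 : M.M i) + (p.2 : M.M i)
        left_inv := fun v => by
          show g i v + (v - g i v) = v
          abel
        right_inv := fun p => by
          obtain ⟨⟨x, hx⟩, ⟨y, hy⟩⟩ := p
          rw [LinearMap.mem_ker] at hy
          refine Prod.ext (Subtype.ext ?_) (Subtype.ext ?_)
          · show g i (x + y) = x
            rw [map_add, hfix i x hx, hy, add_zero]
          · show (x + y) - g i (x + y) = y
            rw [map_add, hfix i x hx, hy, add_zero]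
            abel }
    have hIso : CycRep.Iso M (MR.prod MK) := by
      refine ⟨eS, ?_, ?_⟩
      · intro i h v
        refine Prod.ext (Subtype.ext ?_) (Subtype.ext ?_)
        · show g (i+1) (M.up i h v) = M.up i h (g i v)
          exact hg_up i h v
        · show M.up i h v - g (i+1) (M.up i h v) = M.up i h (v - g i v)
          rw [map_sub, hg_up i h v]
      · intro i h v
        refine Prod.ext (Subtype.ext ?_) (Subtype.ext ?_)
        · show g i (M.down i h v) = M.down i h (g (i+1) v)
          exact hg_down i h v
        · show M.down i h v - g i (M.down i h v) = M.down i h (v - g (i+1) v)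
          rw [map_sub, hg_down i h v]
    have hMRnz : MR.Nonzero := by
      refine ⟨C.partZ θA, ⟨e θA uA, ⟨e θA uA, hgA⟩⟩, ?_⟩
      intro hc
      exact heA (congrArg Subtype.val hc)
    have hMKnz : MK.Nonzero := by
      refine ⟨C.partZ θB, ⟨e θB uB, LinearMap.mem_ker.mpr hgB⟩, ?_⟩
      intro hc
      exact heB (congrArg Subtype.val hc)
    exact hM.2 MR MK hMRnz hMKnz hIso
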